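/- Let φ = □ψ₁ ∧ ⋯ ∧ □ψ_k ∧ ◇ξ₁ ∧ ⋯ ∧ ◇ξ_m ∧ ℓ₁ ∧ ⋯ ∧ ℓ_s be a poor man's formula, where the ℓ_i are literals. Then φ is satisfiable with respect to F≥1 if and only if (1) for all i and j, ℓ_i is not the complement of ℓ_j, (2) for every j ∈ {1,…,m}, the formula ψ₁ ∧ ⋯ ∧ ψ_k ∧ ξ_j is satisfiable with respect to F≥1, and (3) the formula ψ₁ ∧ ⋯ ∧ ψ_k is satisfiable with respect to F≥1. -/

import Mathlib

namespace PoorMansModal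

/-- Modal formulas over propositional variables of type `α`: variables `p`,
negated variables `p̄`, general negation, conjunction, disjunction, box, diamond,
and the constants `true` and `false`. -/
inductive Fml (α : Type) : Type where
  | var : α → Fml α
  | nvar : α → Fml α
  | neg : Fml α → Fml α
  | and : Fml α → Fml α → Fml α
  | or : Fml α → Fml α → Fml α
  | box : Fml α → Fml α
  | dia : Fml α → Fml α
  | tru : Fml α
  | fls : Fml α

/-- A Kripke model: a nonempty set of worlds, an accessibility relation, and a valuation. -/
structure Kripke (α : Type) where
  World : Type
  nonempty : Nonempty World
  R : World → World → Prop
  V : α → World → Prop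

/-- Truth of a formula at a world of a model. -/
def Sat {α : Type} (M : Kripke α) : Fml α → M.World → Prop
  | .var p, w => M.V p w
  | .nvar p, w => ¬ M.V p w
  | .neg φ, w => ¬ Sat M φ w
  | .and φ ψ, w => Sat M φ w ∧ Sat M ψ w
  | .or φ ψ, w => Sat M φ w ∨ Sat M ψ w
  | .box φ, w => ∀ v, M.R w v → Sat M φ v
  | .dia φ, w => ∃ v, M.R w v ∧ Sat M φ v
  | .tru, _ => True
  | .fls, _ => False

/-- Modal depth: depth of nesting of `□` and `◇`. -/
def mdep {α : Type} : Fml α → ℕ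
  | .var _ => 0
  | .nvar _ => 0
  | .neg φ => mdep φ
  | .and φ ψ => max (mdep φ) (mdep ψ)
  | .or φ ψ => max (mdep φ) (mdep ψ)
  | .box φ => mdep φ + 1
  | .dia φ => mdep φ + 1
  | .tru => 0
  | .fls => 0

/-- Conjunction of a list of formulas; the empty conjunction is the always-true formula. -/
def bigConj {α : Type} : List (Fml α) → Fml α
  | [] => .tru
  | [φ] => φ
  | φ :: rest => .and φ (bigConj rest)

/-- `□^k φ`. -/
def boxI {α : Type} : ℕ → Fml α → Fml α
  | 0, φ => φ
  | k + 1, φ => .box (boxI k φ)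

/-- `◇^k φ`. -/
def diaI {α : Type} : ℕ → Fml α → Fml α
  | 0, φ => φ
  | k + 1, φ => .dia (diaI k φ)

/-- `(◇□)^k φ`. -/
def diaBoxI {α : Type} : ℕ → Fml α → Fml α
  | 0, φ => φ
  | k + 1, φ => .dia (.box (diaBoxI k φ))

/-- The literal with variable `l.1` and sign `l.2` (`true` = positive). -/
def litF {α : Type} (l : α × Bool) : Fml α := if l.2 then .var l.1 else .nvar l.1

/-- The variable `p` occurs in the formula. -/
def occursV {α : Type} (p : α) : Fml α → Prop
  | .var q => p = q
  | .nvar q => p = q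
  | .neg φ => occursV p φ
  | .and φ ψ => occursV p φ ∨ occursV p ψ
  | .or φ ψ => occursV p φ ∨ occursV p ψ
  | .box φ => occursV p φ
  | .dia φ => occursV p φ
  | .tru => False
  | .fls => False

/-- Poor man's formulas: built from literals, `∧`, `□`, `◇` only. -/
def PoorF {α : Type} : Fml α → Prop
  | .var _ => True
  | .nvar _ => True
  | .and φ ψ => PoorF φ ∧ PoorF ψ
  | .box φ => PoorF φ
  | .dia φ => PoorF φ
  | _ => False

/-- Formulas of the language `L`: built from literals, `∧`, `∨`, `□`, `◇`. -/
def InL {α : Type} : Fml α → Prop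
  | .var _ => True
  | .nvar _ => True
  | .and φ ψ => InL φ ∧ InL ψ
  | .or φ ψ => InL φ ∧ InL ψ
  | .box φ => InL φ
  | .dia φ => InL φ
  | _ => False

/-- Every world has at most one successor. -/
def AtMostOne {W : Type} (R : W → W → Prop) : Prop :=
  ∀ w v v', R w v → R w v' → v = v'

/-- Every world has at least one successor. -/
def AtLeastOne {W : Type} (R : W → W → Prop) : Prop :=
  ∀ w, ∃ v, R w v

/-- Every world has at most two successors. -/
def AtMostTwo {W : Type} (R : W → W → Prop) : Prop :=
  ∀ w v₁ v₂ v₃, R w v₁ → R w v₂ → R w v₃ → v₁ = v₂ ∨ v₁ = v₃ ∨ v₂ = v₃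

/-- `chainR R n w v`: there is an `R`-path of length exactly `n` from `w` to `v`. -/
def chainR {W : Type} (R : W → W → Prop) : ℕ → W → W → Prop
  | 0, w, v => w = v
  | k + 1, w, v => ∃ u, R w u ∧ chainR R k u v

/-- `R` is the parent-child relation of a rooted tree with root `root`
in which every node has at most two children. -/
structure IsBinTree {W : Type} (R : W → W → Prop) (root : W) : Prop where
  reach : ∀ w, Relation.ReflTransGen R root w
  root_no_parent : ∀ w, ¬ R w root
  unique_parent : ∀ w v v', R v w → R v' w → v = v'
  acyclic : ∀ w, ¬ Relation.TransGen R w w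
  at_most_two_children : ∀ w v₁ v₂ v₃, R w v₁ → R w v₂ → R w v₃ → v₁ = v₂ ∨ v₁ = v₃ ∨ v₂ = v₃

/-- `φ_exp = ⋀_{i=1}^n □^{i-1}(◇□^{n-i} p_i ∧ ◇□^{n-i} p̄_i)`, with `p_i = var i`. -/
def phiExp (n : ℕ) : Fml ℕ :=
  bigConj ((List.range n).map (fun j =>
    boxI j (.and (.dia (boxI (n - 1 - j) (.var (j + 1))))
                 (.dia (boxI (n - 1 - j) (.nvar (j + 1)))))))

/-- Satisfiability with respect to the class of all frames. -/
def SatAll (φ : Fml ℕ) : Prop := ∃ (M : Kripke ℕ) (w : M.World), Sat M φ w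

/-- Satisfiability with respect to `F≤1`. -/
def SatLe1 (φ : Fml ℕ) : Prop := ∃ M : Kripke ℕ, AtMostOne M.R ∧ ∃ w, Sat M φ w

/-- Satisfiability with respect to `F≥1`. -/
def SatGe1 (φ : Fml ℕ) : Prop := ∃ M : Kripke ℕ, AtLeastOne M.R ∧ ∃ w, Sat M φ w

/-- Satisfiability with respect to `F≤2`. -/
def SatLe2 (φ : Fml ℕ) : Prop := ∃ M : Kripke ℕ, AtMostTwo M.R ∧ ∃ w, Sat M φ w

/-- A one-world model with no successors, realizing the boolean assignment `v`;
truth at its world is propositional truth for formulas without modal operators. -/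
def propModel (v : ℕ → Bool) : Kripke ℕ :=
  { World := Unit, nonempty := ⟨()⟩, R := fun _ _ => False, V := fun p _ => v p = true }

/-- Propositional satisfaction of `φ` under the assignment `v`. -/
def PropSat (v : ℕ → Bool) (φ : Fml ℕ) : Prop := Sat (propModel v) φ ()


theorem sat_bigConj {α : Type} (M : Kripke α) (L : List (Fml α)) (w : M.World) :
    Sat M (bigConj L) w ↔ ∀ φ ∈ L, Sat M φ w := by
  induction L with
  | nil => simp [bigConj, Sat]
  | cons φ rest ih =>
    cases rest with
    | nil => simp [bigConj]
    | cons ψ t =>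
      constructor
      · rintro ⟨h1, h2⟩ χ hχ
        rcases List.mem_cons.mp hχ with h | h
        · exact h ▸ h1
        · exact ih.mp h2 χ h
      · intro h
        exact ⟨h φ (by simp), ih.mpr fun χ hχ => h χ (List.mem_cons_of_mem _ hχ)⟩

/-- Disjoint union of a family of models with a new root pointing at designated worlds. -/
def combModel (ι : Type) (M : ι → Kripke ℕ) (w : ∀ i, (M i).World) (V0 : ℕ → Prop) :
    Kripke ℕ where
  World := Option ((i : ι) × (M i).World)
  nonempty := ⟨none⟩
  R := fun x y => match x with
    | none => ∃ i, y = some ⟨i, w i⟩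
    | some ⟨i, u⟩ => ∃ v, (M i).R u v ∧ y = some ⟨i, v⟩
  V := fun p x => match x with
    | none => V0 p
    | some ⟨i, u⟩ => (M i).V p u

theorem sat_comb {ι : Type} (M : ι → Kripke ℕ) (w : ∀ i, (M i).World) (V0 : ℕ → Prop)
    (φ : Fml ℕ) : ∀ (i : ι) (u : (M i).World),
      Sat (combModel ι M w V0) φ (some ⟨i, u⟩) ↔ Sat (M i) φ u := by
  induction φ with
  | var p => intro i u; simp [Sat, combModel]
  | nvar p => intro i u; simp [Sat, combModel]
  | neg φ ih => intro i u; simp only [Sat, ih]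
  | and φ ψ ihφ ihψ => intro i u; simp only [Sat, ihφ, ihψ]
  | or φ ψ ihφ ihψ => intro i u; simp only [Sat, ihφ, ihψ]
  | box φ ih =>
    intro i u
    constructor
    · intro h v hv
      exact (ih i v).mp (h (some ⟨i, v⟩) ⟨v, hv, rfl⟩)
    · rintro h x ⟨v, hv, rfl⟩
      exact (ih i v).mpr (h v hv)
  | dia φ ih =>
    intro i u
    constructor
    · rintro ⟨x, ⟨v, hv, rfl⟩, hs⟩
      exact ⟨v, hv, (ih i v).mp hs⟩
    · rintro ⟨v, hv, hs⟩
      exact ⟨some ⟨i, v⟩, ⟨v, hv, rfl⟩, (ih i v).mpr hs⟩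
  | tru => intro i u; simp [Sat]
  | fls => intro i u; simp [Sat]

/-- A poor man's formula
`φ = □ψ₁ ∧ ⋯ ∧ □ψ_k ∧ ◇ξ₁ ∧ ⋯ ∧ ◇ξ_m ∧ ℓ₁ ∧ ⋯ ∧ ℓ_s` is satisfiable with respect to
`F≥1` iff (1) no literal `ℓ_i` is the complement of a literal `ℓ_j`, (2) for every `j`,
`ψ₁ ∧ ⋯ ∧ ψ_k ∧ ξ_j` is satisfiable with respect to `F≥1`, and (3) `ψ₁ ∧ ⋯ ∧ ψ_k` is
satisfiable with respect to `F≥1`. -/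
theorem stmt6 (ψs ξs : List (Fml ℕ)) (ls : List (ℕ × Bool))
    (hψ : ∀ ψ ∈ ψs, PoorF ψ) (hξ : ∀ ξ ∈ ξs, PoorF ξ) :
    SatGe1 (bigConj (ψs.map .box ++ ξs.map .dia ++ ls.map litF)) ↔
      ((∀ l ∈ ls, ∀ l' ∈ ls, ¬ (l.1 = l'.1 ∧ l.2 = !l'.2)) ∧
        (∀ ξ ∈ ξs, SatGe1 (bigConj (ψs ++ [ξ]))) ∧
        SatGe1 (bigConj ψs)) := by
  constructor
  · rintro ⟨M, hAL, w, hw⟩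
    rw [sat_bigConj] at hw
    have hbox : ∀ ψ ∈ ψs, Sat M (.box ψ) w := fun ψ h =>
      hw _ (List.mem_append.mpr (Or.inl (List.mem_append.mpr (Or.inl (List.mem_map.mpr ⟨ψ, h, rfl⟩)))))
    have hdia : ∀ ξ ∈ ξs, Sat M (.dia ξ) w := fun ξ h =>
      hw _ (List.mem_append.mpr (Or.inl (List.mem_append.mpr (Or.inr (List.mem_map.mpr ⟨ξ, h, rfl⟩)))))
    have hlit : ∀ l ∈ ls, Sat M (litF l) w := fun l h =>
      hw _ (List.mem_append.mpr (Or.inr (List.mem_map.mpr ⟨l, h, rfl⟩)))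
    refine ⟨?_, ?_, ?_⟩
    · rintro l hl l' hl' ⟨h1, h2⟩
      have s1 := hlit l hl
      have s2 := hlit l' hl'
      rcases l with ⟨p, b⟩
      rcases l' with ⟨p', b'⟩
      simp at h1 h2
      subst h1; subst h2
      cases b' <;> simp [litF, Sat] at s1 s2 <;> first | exact s1 s2 | exact s2 s1
    · intro ξ hξmem
      obtain ⟨v, hRv, hv⟩ := hdia ξ hξmem
      refine ⟨M, hAL, v, ?_⟩
      rw [sat_bigConj]
      intro χ hχ
      rcases List.mem_append.mp hχ with h | h
      · exact hbox χ h v hRv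
      · simp at h; exact h ▸ hv
    · obtain ⟨v, hRv⟩ := hAL w
      refine ⟨M, hAL, v, ?_⟩
      rw [sat_bigConj]
      intro χ hχ
      exact hbox χ hχ v hRv
  · rintro ⟨h1, h2, h3⟩
    obtain ⟨M0, hAL0, w0, hw0⟩ := h3
    choose Mf hALf wf hwf using fun j : Fin ξs.length => h2 (ξs.get j) (ξs.get_mem j)
    set ι := Option (Fin ξs.length) with hι
    set Mi : ι → Kripke ℕ := fun i => match i with | none => M0 | some j => Mf j with hMi
    set wi : ∀ i, (Mi i).World := fun i => match i with | none => w0 | some j => wf j with hwi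
    set V0 : ℕ → Prop := fun p => (p, true) ∈ ls with hV0
    -- designated worlds satisfy all ψs
    have hψall : ∀ i, ∀ ψ ∈ ψs, Sat (Mi i) ψ (wi i) := by
      intro i ψ hmem
      match i with
      | none => exact (sat_bigConj _ _ _).mp hw0 ψ hmem
      | some j => exact (sat_bigConj _ _ _).mp (hwf j) ψ (List.mem_append.mpr (Or.inl hmem))
    refine ⟨combModel ι Mi wi V0, ?_, none, ?_⟩
    · intro x
      match x with
      | none => exact ⟨some ⟨none, wi none⟩, none, rfl⟩
      | some ⟨i, u⟩ =>
        match i with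
        | none =>
          obtain ⟨v, hv⟩ := hAL0 u
          exact ⟨some ⟨none, v⟩, v, hv, rfl⟩
        | some j =>
          obtain ⟨v, hv⟩ := hALf j u
          exact ⟨some ⟨some j, v⟩, v, hv, rfl⟩
    · refine (sat_bigConj _ _ _).mpr ?_
      intro φ hφ
      rcases List.mem_append.mp hφ with h | h
      · rcases List.mem_append.mp h with h | h
        · obtain ⟨ψ, hmem, rfl⟩ := List.mem_map.mp h
          rintro x ⟨i, rfl⟩
          exact (sat_comb Mi wi V0 ψ i (wi i)).mpr (hψall i ψ hmem)
        · obtain ⟨ξ, hmem, rfl⟩ := List.mem_map.mp h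
          obtain ⟨j, hj⟩ := List.mem_iff_get.mp hmem
          refine ⟨some ⟨some j, wf j⟩, ⟨some j, rfl⟩, ?_⟩
          refine (sat_comb Mi wi V0 ξ (some j) (wf j)).mpr ?_
          have := (sat_bigConj _ _ _).mp (hwf j) (ξs.get j)
            (List.mem_append.mpr (Or.inr (by simp)))
          exact hj ▸ this
      · obtain ⟨l, hmem, rfl⟩ := List.mem_map.mp h
        rcases l with ⟨p, b⟩
        cases b with
        | true =>
          simpa [litF, Sat, combModel] using hmem
        | false =>
          have hneg : ¬ V0 p := fun hc => h1 (p, false) hmem (p, true) hc ⟨rfl, rfl⟩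
          simpa [litF, Sat, combModel] using hneg

end PoorMansModal
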